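/- Relaxed Repulsing-PAST Rule (Theorem 6, second part): Let (M_n)_{n∈ℕ} be an adapted, integrable real-valued process on a filtered probability space and T a stopping time. Suppose there are a constant c > 0 and an index i₀ ∈ ℕ such that: (i) P({M_{i₀} < 0} ∩ {T > i₀}) > 0; (ii) for every n ≥ i₀, M_n ≥ 0 P-almost everywhere on the event {T = n}; (iii) for every n ≥ i₀, E(M_{n+1} | ℱ_n) ≤ M_n P-almost everywhere on {T > n}; and (iv) for every n ≥ i₀, |M_{n+1} − M_n| < c P-almost surely. Then E(T) = ∞, i.e. termination is not positive almost sure. -/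

import Mathlib

open MeasureTheory Filter
open scoped ENNReal Topology

/-- **Relaxed Repulsing-PAST Rule.** If `(M n)` is an adapted integrable process, `T` a
stopping time, and there are a constant `c > 0` and an index `i₀ ∈ ℕ` such that
`P({M i₀ < 0} ∩ {T > i₀}) > 0`, and for every `n ≥ i₀`: `M n ≥ 0` a.e. on `{T = n}`,
`(M n)` is a supermartingale on `{T > n}`, and the differences are bounded by `c` a.s.,
then `E(T) = ∞` (termination is not positive almost sure). -/
theorem relaxed_repulsing_past_rule
    {Ω : Type*} {mΩ : MeasurableSpace Ω} {P : Measure Ω} [IsProbabilityMeasure P]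
    (ℱ : Filtration ℕ mΩ) (M : ℕ → Ω → ℝ) (T : Ω → ℕ∞)
    (hAdapted : Adapted ℱ M) (hInt : ∀ n, Integrable (M n) P)
    (hStop : ∀ n : ℕ, MeasurableSet[ℱ n] {ω | T ω ≤ (n : ℕ∞)})
    (c : ℝ) (hc : 0 < c) (i₀ : ℕ)
    (hNeg : 0 < P {ω | M i₀ ω < 0 ∧ (i₀ : ℕ∞) < T ω})
    (hTerm : ∀ n : ℕ, i₀ ≤ n → ∀ᵐ ω ∂P, T ω = (n : ℕ∞) → 0 ≤ M n ω)
    (hSM : ∀ n : ℕ, i₀ ≤ n → ∀ᵐ ω ∂P, (n : ℕ∞) < T ω →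
      (P[M (n + 1)|ℱ n]) ω ≤ M n ω)
    (hBdd : ∀ n : ℕ, i₀ ≤ n → ∀ᵐ ω ∂P, |M (n + 1) ω - M n ω| < c) :
    (∫⁻ ω, (T ω : ℝ≥0∞) ∂P) = ⊤ := by
  by_contra hT
  classical
  -- measurability of T
  have hTle : ∀ n : ℕ, MeasurableSet {ω | T ω ≤ (n : ℕ∞)} := fun n => ℱ.le n _ (hStop n)
  have hTm : Measurable T := by
    apply measurable_to_countable'
    intro y
    induction y using ENat.recTopCoe with
    | top =>
      have he : T ⁻¹' {⊤} = (⋃ n : ℕ, {ω | T ω ≤ (n : ℕ∞)})ᶜ := by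
        ext ω
        simp only [Set.mem_preimage, Set.mem_singleton_iff, Set.mem_compl_iff,
          Set.mem_iUnion, Set.mem_setOf_eq, not_exists, not_le]
        constructor
        · intro h n; rw [h]; exact WithTop.coe_lt_top n
        · intro h
          by_contra hne
          obtain ⟨k, hk⟩ := WithTop.ne_top_iff_exists.1 hne
          exact absurd (h k) (by rw [← hk]; exact lt_irrefl (k : ℕ∞))
      rw [he]; exact (MeasurableSet.iUnion fun n => hTle n).compl
    | coe k =>
      cases k with
      | zero =>
        have he : T ⁻¹' {((0 : ℕ) : ℕ∞)} = {ω | T ω ≤ ((0 : ℕ) : ℕ∞)} := by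
          ext ω
          simp only [Set.mem_preimage, Set.mem_singleton_iff, Set.mem_setOf_eq,
            Nat.cast_zero]
          exact ⟨fun h => h ▸ le_refl _, fun h => le_antisymm h zero_le⟩
        rw [he]; exact hTle 0
      | succ k =>
        have he : T ⁻¹' {((k + 1 : ℕ) : ℕ∞)}
            = {ω | T ω ≤ ((k + 1 : ℕ) : ℕ∞)} \ {ω | T ω ≤ (k : ℕ∞)} := by
          ext ω
          simp only [Set.mem_preimage, Set.mem_singleton_iff, Set.mem_diff,
            Set.mem_setOf_eq, not_le]
          constructor
          · intro h
            rw [h]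
            exact ⟨le_refl _, by exact_mod_cast Nat.lt_succ_self k⟩
          · rintro ⟨h1, h2⟩
            refine le_antisymm h1 ?_
            have := (ENat.add_one_le_iff (show (k : ℕ∞) ≠ ⊤ by simp)).2 h2
            simpa [Nat.cast_add, Nat.cast_one] using this
        rw [he]; exact (hTle (k + 1)).diff (hTle k)
  have hcm : Measurable fun ω => (T ω : ℝ≥0∞) := (measurable_of_countable _).comp hTm
  have hTfin : ∀ᵐ ω ∂P, T ω ≠ ⊤ := by
    filter_upwards [ae_lt_top hcm hT] with ω hω
    intro h; rw [h] at hω; simp at hω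
  -- stopped index and stopped process
  set τ : ℕ → Ω → ℕ := fun n ω => (min (T ω) (n : ℕ∞)).toNat with hτdef
  have hτm : ∀ n, Measurable (τ n) :=
    fun n => (measurable_of_countable (fun a : ℕ∞ => (min a (n : ℕ∞)).toNat)).comp hTm
  have hτ_eq : ∀ n ω, ((τ n ω : ℕ∞)) = min (T ω) (n : ℕ∞) := by
    intro n ω
    refine ENat.coe_toNat ?_
    exact ((min_le_right _ _).trans_lt (WithTop.coe_lt_top n)).ne
  have hτ_le : ∀ n ω, τ n ω ≤ n := by
    intro n ω
    have : (τ n ω : ℕ∞) ≤ (n : ℕ∞) := (hτ_eq n ω).le.trans (min_le_right _ _)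
    exact_mod_cast this
  have hτ_ge : ∀ (n : ℕ) (ω : Ω), (n : ℕ∞) ≤ T ω → τ n ω = n := by
    intro n ω h
    have : (τ n ω : ℕ∞) = (n : ℕ∞) := by rw [hτ_eq n ω, min_eq_right h]
    exact_mod_cast this
  set Y : ℕ → Ω → ℝ := fun n ω => M (τ n ω) ω with hYdef
  have hτsets : ∀ n k, MeasurableSet {ω | τ n ω = k} :=
    fun n k => hτm n (measurableSet_singleton k)
  have hYrep : ∀ n, Y n = fun ω =>
      ∑ k ∈ Finset.range (n + 1), Set.indicator {ω' | τ n ω' = k} (M k) ω := by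
    intro n; funext ω
    have h1 : τ n ω ∈ Finset.range (n + 1) := Finset.mem_range.2 (Nat.lt_succ_of_le (hτ_le n ω))
    rw [Finset.sum_eq_single (τ n ω)]
    · simp [Set.indicator_apply, hYdef]
    · intro b _ hb
      exact Set.indicator_of_notMem (fun h => hb h.symm) _
    · intro h; exact absurd h1 h
  have hYint : ∀ n, Integrable (Y n) P := by
    intro n; rw [hYrep n]
    exact integrable_finset_sum _ fun k _ => (hInt k).indicator (hτsets n k)
  -- the event A
  set A : Set Ω := {ω | M i₀ ω < 0 ∧ (i₀ : ℕ∞) < T ω} with hAdef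
  have hAF : MeasurableSet[ℱ i₀] A := by
    have h1 : MeasurableSet[ℱ i₀] {ω | M i₀ ω < 0} :=
      hAdapted i₀ measurableSet_Iio
    have h2 : MeasurableSet[ℱ i₀] {ω | (i₀ : ℕ∞) < T ω} := by
      have h := (hStop i₀).compl
      have : {ω | T ω ≤ (i₀ : ℕ∞)}ᶜ = {ω | (i₀ : ℕ∞) < T ω} := by
        ext ω; simp [not_le]
      rwa [this] at h
    have : A = {ω | M i₀ ω < 0} ∩ {ω | (i₀ : ℕ∞) < T ω} := rfl
    rw [this]; exact h1.inter h2
  have hAm : MeasurableSet A := ℱ.le i₀ _ hAF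
  have hTgtm : ∀ n : ℕ, MeasurableSet {ω | (n : ℕ∞) < T ω} := by
    intro n
    have h := (hTle n).compl
    have : {ω | T ω ≤ (n : ℕ∞)}ᶜ = {ω | (n : ℕ∞) < T ω} := by ext ω; simp [not_le]
    rwa [this] at h
  -- increment identity
  have hYdiff : ∀ n ω, Y (n + 1) ω - Y n ω
      = Set.indicator {ω' | (n : ℕ∞) < T ω'} (fun ω' => M (n + 1) ω' - M n ω') ω := by
    intro n ω
    by_cases h : (n : ℕ∞) < T ω
    · have h1 : τ n ω = n := hτ_ge n ω h.le
      have h2 : τ (n + 1) ω = n + 1 := by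
        refine hτ_ge (n + 1) ω ?_
        have := (ENat.add_one_le_iff (show (n : ℕ∞) ≠ ⊤ by simp)).2 h
        simpa [Nat.cast_add, Nat.cast_one] using this
      rw [Set.indicator_of_mem (show ω ∈ {ω' | (n : ℕ∞) < T ω'} from h)]
      simp only [hYdef, h1, h2]
    · have hle : T ω ≤ (n : ℕ∞) := not_lt.1 h
      have e1 : (τ n ω : ℕ∞) = T ω := by rw [hτ_eq n ω, min_eq_left hle]
      have e2 : (τ (n + 1) ω : ℕ∞) = T ω := by
        rw [hτ_eq (n + 1) ω, min_eq_left (hle.trans (by exact_mod_cast Nat.le_succ n))]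
      have e3 : τ (n + 1) ω = τ n ω := by
        have := e2.trans e1.symm; exact_mod_cast this
      rw [Set.indicator_of_notMem (show ω ∉ {ω' | (n : ℕ∞) < T ω'} from h)]
      simp only [hYdef, e3, sub_self]
  -- supermartingale step
  have hstep : ∀ n, i₀ ≤ n → ∫ ω in A, Y (n + 1) ω ∂P ≤ ∫ ω in A, Y n ω ∂P := by
    intro n hn
    set B : Set Ω := A ∩ {ω | (n : ℕ∞) < T ω} with hBdef
    have hBF : MeasurableSet[ℱ n] B := by
      refine (ℱ.mono hn _ hAF).inter ?_
      have h := (hStop n).compl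
      have : {ω | T ω ≤ (n : ℕ∞)}ᶜ = {ω | (n : ℕ∞) < T ω} := by ext ω; simp [not_le]
      rwa [this] at h
    have hBm : MeasurableSet B := ℱ.le n _ hBF
    have key : ∫ ω in B, M (n + 1) ω ∂P ≤ ∫ ω in B, M n ω ∂P := by
      rw [← setIntegral_condExp (ℱ.le n) (hInt (n + 1)) hBF]
      refine setIntegral_mono_ae_restrict integrable_condExp.integrableOn
        (hInt n).integrableOn ?_
      rw [EventuallyLE, ae_restrict_iff' hBm]
      filter_upwards [hSM n hn] with ω hω hωB
      exact hω hωB.2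
    have e1 : ∫ ω in A, Y (n + 1) ω ∂P - ∫ ω in A, Y n ω ∂P
        = ∫ ω in B, (M (n + 1) ω - M n ω) ∂P := by
      rw [← integral_sub (hYint (n + 1)).integrableOn (hYint n).integrableOn]
      calc ∫ ω in A, (Y (n + 1) ω - Y n ω) ∂P
          = ∫ ω in A, Set.indicator {ω' | (n : ℕ∞) < T ω'}
              (fun ω' => M (n + 1) ω' - M n ω') ω ∂P := by
            exact integral_congr_ae (ae_of_all _ fun ω => hYdiff n ω)
        _ = ∫ ω in A ∩ {ω' | (n : ℕ∞) < T ω'}, (M (n + 1) ω - M n ω) ∂P :=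
            setIntegral_indicator (hTgtm n)
    have e2 : ∫ ω in B, (M (n + 1) ω - M n ω) ∂P ≤ 0 := by
      rw [integral_sub (hInt (n + 1)).integrableOn (hInt n).integrableOn]
      linarith
    linarith [e1, e2]
  have hIle : ∀ n, i₀ ≤ n → ∫ ω in A, Y n ω ∂P ≤ ∫ ω in A, Y i₀ ω ∂P := by
    intro n hn
    induction n, hn using Nat.le_induction with
    | base => exact le_refl _
    | succ n hn ih => exact (hstep n hn).trans ih
  have hYi₀ : ∫ ω in A, Y i₀ ω ∂P = ∫ ω in A, M i₀ ω ∂P := by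
    refine setIntegral_congr_fun hAm fun ω hω => ?_
    have h1 : τ i₀ ω = i₀ := hτ_ge i₀ ω hω.2.le
    simp only [hYdef, h1]
  -- strict negativity of the starting integral
  have hIneg : ∫ ω in A, M i₀ ω ∂P < 0 := by
    set f : Ω → ℝ := fun ω => (-(M i₀ ω)) ⊔ 0 with hfdef
    have hfint : Integrable f P := (hInt i₀).neg.pos_part
    have hpos : 0 < ∫ ω in A, f ω ∂P := by
      have h0 : 0 ≤ᵐ[P.restrict A] f := ae_of_all _ fun ω => le_max_right _ _
      rw [setIntegral_pos_iff_support_of_nonneg_ae h0 hfint.integrableOn]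
      refine lt_of_lt_of_le hNeg (measure_mono ?_)
      intro ω hω
      refine ⟨?_, hω⟩
      have : f ω = -(M i₀ ω) := max_eq_left (by linarith [hω.1])
      simp only [Function.mem_support, this]
      intro hcon; rw [neg_eq_zero] at hcon; linarith [hω.1]
    have heq : ∫ ω in A, M i₀ ω ∂P = - ∫ ω in A, f ω ∂P := by
      rw [← integral_neg]
      refine setIntegral_congr_fun hAm fun ω hω => ?_
      have : f ω = -(M i₀ ω) := max_eq_left (by linarith [hω.1])
      rw [this, neg_neg]
    rw [heq]; linarith
  -- almost-everywhere combined hypotheses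
  have hBddAll : ∀ᵐ ω ∂P, ∀ n, i₀ ≤ n → |M (n + 1) ω - M n ω| ≤ c := by
    rw [ae_all_iff]
    intro n
    by_cases hn : i₀ ≤ n
    · filter_upwards [hBdd n hn] with ω h _; exact h.le
    · exact ae_of_all _ fun ω h => absurd h hn
  have hTermAll : ∀ᵐ ω ∂P, ∀ n, i₀ ≤ n → T ω = (n : ℕ∞) → 0 ≤ M n ω := by
    rw [ae_all_iff]
    intro n
    by_cases hn : i₀ ≤ n
    · filter_upwards [hTerm n hn] with ω h _; exact h
    · exact ae_of_all _ fun ω h => absurd h hn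
  -- limit function
  set L : Ω → ℝ := fun ω => M ((T ω).toNat) ω with hLdef
  have hconv : ∀ᵐ ω ∂P, Tendsto (fun n => Y (n + i₀) ω) atTop (𝓝 (L ω)) := by
    filter_upwards [hTfin] with ω hω
    refine tendsto_atTop_of_eventually_const (i₀ := (T ω).toNat) ?_
    intro n hn
    have hTle' : T ω ≤ ((n + i₀ : ℕ) : ℕ∞) := by
      rw [← ENat.coe_toNat hω]
      exact_mod_cast hn.trans (Nat.le_add_right n i₀)
    have e1 : (τ (n + i₀) ω : ℕ∞) = T ω := by rw [hτ_eq, min_eq_left hTle']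
    have e2 : τ (n + i₀) ω = (T ω).toNat := by
      rw [← ENat.coe_toNat hω] at e1; exact_mod_cast e1
    simp only [hYdef, hLdef, e2]
  -- dominating function
  set g : Ω → ℝ := fun ω => (∑ k ∈ Finset.range (i₀ + 1), |M k ω|) + c * ((T ω).toNat : ℝ)
    with hgdef
  have hgint : Integrable g P := by
    refine Integrable.add (integrable_finset_sum _ fun k _ => (hInt k).abs) ?_
    refine Integrable.const_mul ?_ c
    have hm : Measurable fun ω => (((T ω).toNat : ℕ) : ℝ) :=
      ((measurable_of_countable (fun k : ℕ => (k : ℝ))).comp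
        ((measurable_of_countable ENat.toNat).comp hTm))
    refine ⟨hm.aestronglyMeasurable, ?_⟩
    have hb : ∀ ω, (‖(((T ω).toNat : ℕ) : ℝ)‖₊ : ℝ≥0∞) ≤ (T ω : ℝ≥0∞) := by
      intro ω
      have h1 : (‖(((T ω).toNat : ℕ) : ℝ)‖₊ : ℝ≥0∞) = (((T ω).toNat : ℕ) : ℝ≥0∞) := by
        simp
      rw [h1]
      have h2 : (((T ω).toNat : ℕ∞) : ℝ≥0∞) ≤ ((T ω : ℕ∞) : ℝ≥0∞) :=
        ENat.toENNReal_le.2 (ENat.coe_toNat_le_self _)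
      simpa using h2
    refine lt_of_le_of_lt (lintegral_mono fun ω => hb ω) ?_
    exact lt_top_iff_ne_top.2 hT
  -- domination of the stopped process
  have hYabs : ∀ n, ∀ᵐ ω ∂P, ‖Y (n + i₀) ω‖ ≤ g ω := by
    intro n
    filter_upwards [hBddAll, hTfin] with ω hb hfin
    have key : ∀ m, i₀ ≤ m → |Y m ω - Y i₀ ω| ≤ c * (τ m ω : ℝ) := by
      intro m hm
      induction m, hm using Nat.le_induction with
      | base => simp; positivity
      | succ m hm ih =>
        by_cases h : (m : ℕ∞) < T ω
        · have hτm1 : τ m ω = m := hτ_ge m ω h.le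
          have hτm2 : τ (m + 1) ω = m + 1 := by
            refine hτ_ge (m + 1) ω ?_
            have := (ENat.add_one_le_iff (show (m : ℕ∞) ≠ ⊤ by simp)).2 h
            simpa [Nat.cast_add, Nat.cast_one] using this
          have hdiff : |Y (m + 1) ω - Y m ω| ≤ c := by
            rw [hYdiff m ω, Set.indicator_of_mem (show ω ∈ {ω' | (m : ℕ∞) < T ω'} from h)]
            exact hb m hm
          calc |Y (m + 1) ω - Y i₀ ω|
              ≤ |Y (m + 1) ω - Y m ω| + |Y m ω - Y i₀ ω| := by
                have := abs_sub_abs_le_abs_sub (Y (m+1) ω) (Y m ω)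
                calc |Y (m + 1) ω - Y i₀ ω|
                    = |(Y (m + 1) ω - Y m ω) + (Y m ω - Y i₀ ω)| := by ring_nf
                  _ ≤ _ := abs_add_le _ _
            _ ≤ c + c * (τ m ω : ℝ) := add_le_add hdiff ih
            _ = c * (τ (m + 1) ω : ℝ) := by
                rw [hτm1, hτm2]; push_cast; ring
        · have e0 : Y (m + 1) ω - Y m ω = 0 := by
            rw [hYdiff m ω, Set.indicator_of_notMem (show ω ∉ {ω' | (m : ℕ∞) < T ω'} from h)]
          have e3 : τ (m + 1) ω = τ m ω := by
            have hle : T ω ≤ (m : ℕ∞) := not_lt.1 h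
            have e1 : (τ m ω : ℕ∞) = T ω := by rw [hτ_eq m ω, min_eq_left hle]
            have e2 : (τ (m + 1) ω : ℕ∞) = T ω := by
              rw [hτ_eq (m + 1) ω, min_eq_left (hle.trans (by exact_mod_cast Nat.le_succ m))]
            have := e2.trans e1.symm; exact_mod_cast this
          have : Y (m + 1) ω = Y m ω := by linarith [e0]
          rw [this, e3]; exact ih
    have hτT : τ (n + i₀) ω ≤ (T ω).toNat := by
      have h1 : (τ (n + i₀) ω : ℕ∞) ≤ T ω := (hτ_eq _ ω).le.trans (min_le_left _ _)
      have := ENat.toNat_le_toNat h1 hfin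
      simpa using this
    have hYi₀bd : |Y i₀ ω| ≤ ∑ k ∈ Finset.range (i₀ + 1), |M k ω| := by
      have hmem : τ i₀ ω ∈ Finset.range (i₀ + 1) :=
        Finset.mem_range.2 (Nat.lt_succ_of_le (hτ_le i₀ ω))
      exact Finset.single_le_sum (f := fun k => |M k ω|) (fun k _ => abs_nonneg _) hmem
    have h1 : |Y (n + i₀) ω| ≤ |Y i₀ ω| + c * (τ (n + i₀) ω : ℝ) := by
      have := key (n + i₀) (Nat.le_add_left _ _)
      calc |Y (n + i₀) ω| = |(Y (n + i₀) ω - Y i₀ ω) + Y i₀ ω| := by ring_nf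
        _ ≤ |Y (n + i₀) ω - Y i₀ ω| + |Y i₀ ω| := abs_add_le _ _
        _ ≤ c * (τ (n + i₀) ω : ℝ) + |Y i₀ ω| := by linarith
        _ = |Y i₀ ω| + c * (τ (n + i₀) ω : ℝ) := by ring
    rw [Real.norm_eq_abs]
    have h2 : c * (τ (n + i₀) ω : ℝ) ≤ c * ((T ω).toNat : ℝ) := by
      apply mul_le_mul_of_nonneg_left _ hc.le
      exact_mod_cast hτT
    calc |Y (n + i₀) ω| ≤ |Y i₀ ω| + c * (τ (n + i₀) ω : ℝ) := h1
      _ ≤ (∑ k ∈ Finset.range (i₀ + 1), |M k ω|) + c * ((T ω).toNat : ℝ) := by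
          exact add_le_add hYi₀bd h2
  -- dominated convergence on A
  have hDCT : Tendsto (fun n => ∫ ω in A, Y (n + i₀) ω ∂P) atTop (𝓝 (∫ ω in A, L ω ∂P)) := by
    refine tendsto_integral_of_dominated_convergence g
      (fun n => (hYint (n + i₀)).aestronglyMeasurable.restrict)
      hgint.restrict
      (fun n => ae_restrict_of_ae (hYabs n))
      (ae_restrict_of_ae hconv)
  have hLle : ∫ ω in A, L ω ∂P ≤ ∫ ω in A, M i₀ ω ∂P := by
    refine le_of_tendsto hDCT (Eventually.of_forall fun n => ?_)
    exact (hIle (n + i₀) (Nat.le_add_left _ _)).trans_eq hYi₀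
  have hLnonneg : 0 ≤ ∫ ω in A, L ω ∂P := by
    refine setIntegral_nonneg_ae hAm ?_
    filter_upwards [hTermAll, hTfin] with ω hterm hfin hA
    have h1 : (i₀ : ℕ∞) < T ω := hA.2
    have h2 : i₀ ≤ (T ω).toNat := by
      have := ENat.toNat_le_toNat h1.le hfin
      simpa using this
    exact hterm ((T ω).toNat) h2 (ENat.coe_toNat hfin).symm
  linarith
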